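/- Fix a point p_i and a uniformly random permutation p_1, …, p_n. A split-above event E'_{i,j} occurs if there exists a bunch B near p_i in P_j (for fixed constants α, β) such that p_j is the unique closest point of P_j \ B to the first-inserted point of B. If the number of bunches near p_i is at most d, then Σ_{j=2}^{n} Pr[E'_{i,j}] ≤ d·Σ_{j=2}^{n} 1/(j−1) = O(d·log n). -/

import Mathlib

open scoped Classical
noncomputable section

/-- shift map on ℕ: `t ↦ j`, `s ↦ s-1` for `t < s ≤ j`, identity elsewhere. -/
def cf (t j s : ℕ) : ℕ := if t < s ∧ s ≤ j then s - 1 else if s = t ∧ t ≤ j then j else s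

/-- inverse shift: `j ↦ t`, `s ↦ s+1` for `t ≤ s < j`, identity elsewhere. -/
def cg (t j s : ℕ) : ℕ := if t ≤ s ∧ s < j then s + 1 else if s = j ∧ t ≤ j then t else s

lemma cf_lt {n t j s : ℕ} (ht : t < n) (hj : j < n) (hs : s < n) : cf t j s < n := by
  unfold cf; split_ifs <;> omega

lemma cg_lt {n t j s : ℕ} (ht : t < n) (hj : j < n) (hs : s < n) : cg t j s < n := by
  unfold cg; split_ifs <;> omega

lemma cg_cf (t j s : ℕ) : cg t j (cf t j s) = s := by
  unfold cf cg; split_ifs <;> omega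

lemma cf_cg (t j s : ℕ) : cf t j (cg t j s) = s := by
  unfold cf cg; split_ifs <;> omega

/-- The cycle `t → t+1 → ⋯ → j → t` as a position relabeling of `Fin n`:
`t ↦ j`, `s ↦ s-1` for `t < s ≤ j`. -/
def cyc {n : ℕ} (t j : Fin n) : Equiv.Perm (Fin n) where
  toFun s := ⟨cf t j s, cf_lt t.2 j.2 s.2⟩
  invFun s := ⟨cg t j s, cg_lt t.2 j.2 s.2⟩
  left_inv s := Fin.ext (cg_cf t j s)
  right_inv s := Fin.ext (cf_cg t j s)

lemma cyc_apply (n : ℕ) (t j s : Fin n) : ((cyc t j s : Fin n) : ℕ) = cf t j s := rfl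
lemma cyc_inv_apply (n : ℕ) (t j s : Fin n) : (((cyc t j)⁻¹ s : Fin n) : ℕ) = cg t j s := rfl

lemma cyc_self {n : ℕ} {t j : Fin n} (ht : t ≤ j) : cyc t j t = j := by
  apply Fin.ext; rw [cyc_apply]; unfold cf
  have h1 : (t:ℕ) ≤ j := ht
  split_ifs <;> omega

lemma cyc_le {n : ℕ} {t j s : Fin n} (ht : t ≤ j) (hs : s ≤ j) : cyc t j s ≤ j := by
  rw [Fin.le_def, cyc_apply]; unfold cf
  have h1 : (t:ℕ) ≤ j := ht
  have h2 : (s:ℕ) ≤ j := hs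
  split_ifs <;> omega

lemma cyc_inv_le {n : ℕ} {t j s : Fin n} (ht : t ≤ j) (hs : s ≤ j) : (cyc t j)⁻¹ s ≤ j := by
  rw [Fin.le_def, cyc_inv_apply]; unfold cg
  have h1 : (t:ℕ) ≤ j := ht
  have h2 : (s:ℕ) ≤ j := hs
  split_ifs <;> omega

lemma cyc_inv_mono {n : ℕ} {t j a b : Fin n} (hab : a ≤ b) (hb : b < j) :
    (cyc t j)⁻¹ a ≤ (cyc t j)⁻¹ b := by
  rw [Fin.le_def, cyc_inv_apply, cyc_inv_apply]; unfold cg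
  have h1 : (a:ℕ) ≤ b := hab
  have h2 : (b:ℕ) < j := hb
  split_ifs <;> omega

/-- `B ⊆ Pj` is a bunch near `pi` with center `x ∈ B` (parameters `α`, `β`, `τ`). -/
def IsBunch {M : Type*} [MetricSpace M] (Pj : Set M) (pi : M) (α β τ : ℝ)
    (B : Set M) (x : M) : Prop :=
  x ∈ B ∧
  B = Metric.closedBall x (α * dist pi x) ∩ Pj ∧
  (∀ y ∈ Pj, dist x y ≤ β * dist pi x → dist x y ≤ α * dist pi x) ∧
  dist pi x ≤ (2 * τ * (τ - 1) / (τ + 2)) * Metric.infDist pi Pj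

/-- The prefix `P_j` of the permutation `σ`: points at positions `≤ j`. -/
def prefixSet {n : ℕ} {M : Type*} (pts : Fin n → M) (σ : Equiv.Perm (Fin n))
    (j : Fin n) : Set M :=
  {y | ∃ t : Fin n, t ≤ j ∧ y = pts (σ t)}

lemma prefixSet_finite {n : ℕ} {M : Type*} (pts : Fin n → M) (σ : Equiv.Perm (Fin n))
    (j : Fin n) : (prefixSet pts σ j).Finite := by
  apply (Set.finite_range pts).subset
  rintro y ⟨t, _, rfl⟩; exact ⟨σ t, rfl⟩

lemma prefixSet_cyc {n : ℕ} {M : Type*} (pts : Fin n → M) (σ : Equiv.Perm (Fin n))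
    {t j : Fin n} (ht : t ≤ j) :
    prefixSet pts (σ * cyc t j) j = prefixSet pts σ j := by
  ext y
  constructor
  · rintro ⟨s, hs, rfl⟩
    exact ⟨cyc t j s, cyc_le ht hs, rfl⟩
  · rintro ⟨s, hs, rfl⟩
    refine ⟨(cyc t j)⁻¹ s, cyc_inv_le ht hs, ?_⟩
    simp [Equiv.Perm.mul_apply]

lemma bunchSet_finite {M : Type*} [MetricSpace M] (q : M) (α β τ : ℝ) {S : Set M}
    (hS : S.Finite) : {B : Set M | ∃ x, IsBunch S q α β τ B x}.Finite := by
  apply (hS.image (fun x => Metric.closedBall x (α * dist q x) ∩ S)).subset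
  rintro B ⟨x, hx, hB, _⟩
  exact ⟨x, (hB ▸ hx).2, hB.symm⟩

/-- An enumeration of the bunches of `S`. -/
noncomputable def bunchIdx {M : Type*} [MetricSpace M] (q : M) (α β τ : ℝ)
    (S B : Set M) : ℕ :=
  if h : {B : Set M | ∃ x, IsBunch S q α β τ B x}.Finite ∧
      B ∈ {B : Set M | ∃ x, IsBunch S q α β τ B x} then
    (h.1.toFinset.equivFin ⟨B, h.1.mem_toFinset.mpr h.2⟩ : Fin _)
  else 0

lemma bunchIdx_lt {M : Type*} [MetricSpace M] {q : M} {α β τ : ℝ} {S B : Set M} {d : ℕ}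
    (hfin : {B : Set M | ∃ x, IsBunch S q α β τ B x}.Finite)
    (hB : B ∈ {B : Set M | ∃ x, IsBunch S q α β τ B x})
    (hd : {B : Set M | ∃ x, IsBunch S q α β τ B x}.ncard ≤ d) :
    bunchIdx q α β τ S B < d := by
  rw [bunchIdx, dif_pos ⟨hfin, hB⟩]
  calc ((⟨hfin, hB⟩ : _ ∧ _).1.toFinset.equivFin ⟨B, _⟩ : Fin _).val
      < hfin.toFinset.card := (hfin.toFinset.equivFin _).2
    _ ≤ d := by rwa [← Set.ncard_eq_toFinset_card _ hfin]

lemma bunchIdx_inj {M : Type*} [MetricSpace M] {q : M} {α β τ : ℝ} {S B B' : Set M}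
    (hfin : {B : Set M | ∃ x, IsBunch S q α β τ B x}.Finite)
    (hB : B ∈ {B : Set M | ∃ x, IsBunch S q α β τ B x})
    (hB' : B' ∈ {B : Set M | ∃ x, IsBunch S q α β τ B x})
    (h : bunchIdx q α β τ S B = bunchIdx q α β τ S B') : B = B' := by
  rw [bunchIdx, dif_pos ⟨hfin, hB⟩, bunchIdx, dif_pos ⟨hfin, hB'⟩] at h
  have := (hfin.toFinset.equivFin).injective (Fin.ext h)
  exact Subtype.ext_iff.mp this

/-- Split-above event `E'_{i,j}`: there is a bunch `B` near the fixed point `q` in the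
prefix `P_j` such that the point inserted at time `j` lies outside `B` and is the unique
closest point of `P_j \ B` to the first-inserted point of `B`. -/
def SplitAboveEvent {n : ℕ} {M : Type*} [MetricSpace M] (pts : Fin n → M) (q : M)
    (α β τ : ℝ) (σ : Equiv.Perm (Fin n)) (j : Fin n) : Prop :=
  ∃ (B : Set M) (x : M), IsBunch (prefixSet pts σ j) q α β τ B x ∧
    pts (σ j) ∈ prefixSet pts σ j ∧ pts (σ j) ∉ B ∧
    ∃ t0 : Fin n, t0 ≤ j ∧ pts (σ t0) ∈ B ∧
      (∀ t : Fin n, t ≤ j → pts (σ t) ∈ B → t0 ≤ t) ∧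
      ∀ y ∈ prefixSet pts σ j, y ∉ B → y ≠ pts (σ j) →
        dist (pts (σ t0)) (pts (σ j)) < dist (pts (σ t0)) y

/-- The value at the minimal `B`-position survives order-preserving relabeling. -/
lemma first_transfer {n : ℕ} {M : Type*} (pts : Fin n → M) {σ : Equiv.Perm (Fin n)}
    {t j t0 : Fin n} {B : Set M}
    (ht : t ≤ j) (ht0 : t0 ≤ j) (hmem : pts (σ t0) ∈ B)
    (hmin : ∀ s, s ≤ j → pts (σ s) ∈ B → t0 ≤ s) (hj : pts (σ j) ∉ B) :
    ∃ u0, u0 ≤ j ∧ (σ * cyc t j) u0 = σ t0 ∧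
      ∀ s, s ≤ j → pts ((σ * cyc t j) s) ∈ B → u0 ≤ s := by
  refine ⟨(cyc t j)⁻¹ t0, cyc_inv_le ht ht0, by simp [Equiv.Perm.mul_apply], ?_⟩
  intro s hs hsB
  have hsB' : pts (σ (cyc t j s)) ∈ B := hsB
  have h1 : cyc t j s ≤ j := cyc_le ht hs
  have h2 : cyc t j s ≠ j := by
    intro h
    have hst : s = t := (cyc t j).injective (h.trans (cyc_self ht).symm)
    apply hj
    rw [hst, cyc_self ht] at hsB'
    exact hsB'
  have h3 : t0 ≤ cyc t j s := hmin _ h1 hsB'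
  have h4 := cyc_inv_mono (t := t) h3 (lt_of_le_of_ne h1 h2)
  simpa using h4

/-- chosen bunch witness for a permutation satisfying the event -/
noncomputable def chooseB {n : ℕ} {M : Type*} [MetricSpace M] (pts : Fin n → M) (q : M)
    (α β τ : ℝ) (j : Fin n) (σ : Equiv.Perm (Fin n)) : Set M :=
  if h : SplitAboveEvent pts q α β τ σ j then h.choose else ∅

lemma key_count {n : ℕ} {M : Type*} [MetricSpace M] (pts : Fin n → M)
    (hinj : Function.Injective pts) (q : M) (α β τ : ℝ) (d : ℕ)
    (hd : ∀ (σ : Equiv.Perm (Fin n)) (j : Fin n),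
      ({B : Set M | ∃ x, IsBunch (prefixSet pts σ j) q α β τ B x}).ncard ≤ d)
    (j : Fin n) :
    (Finset.univ.filter fun σ : Equiv.Perm (Fin n) =>
      SplitAboveEvent pts q α β τ σ j).card * ((j:ℕ) + 1) ≤ d * n.factorial := by
  classical
  set A := Finset.univ.filter fun σ : Equiv.Perm (Fin n) =>
      SplitAboveEvent pts q α β τ σ j with hA
  have hcard : A.card * ((j:ℕ) + 1) = (A ×ˢ Finset.Iic j).card := by
    rw [Finset.card_product, Fin.card_Iic]
  rw [hcard]
  have htarget : ((Finset.range d) ×ˢ (Finset.univ : Finset (Equiv.Perm (Fin n)))).card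
      = d * n.factorial := by
    rw [Finset.card_product, Finset.card_range, Finset.card_univ, Fintype.card_perm,
      Fintype.card_fin]
  rw [← htarget]
  apply Finset.card_le_card_of_injOn
    (fun p => (bunchIdx q α β τ (prefixSet pts p.1 j) (chooseB pts q α β τ j p.1),
      p.1 * cyc p.2 j))
  · rintro ⟨σ, t⟩ hmem
    change (σ, t) ∈ A ×ˢ Finset.Iic j at hmem
    simp only [hA, Finset.mem_product, Finset.mem_filter, Finset.mem_univ, true_and,
      Finset.mem_Iic] at hmem
    obtain ⟨hσ, ht⟩ := hmem
    simp only [Finset.mem_coe, Finset.mem_product, Finset.mem_range, Finset.mem_univ, and_true]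
    have hBdef : chooseB pts q α β τ j σ = hσ.choose := dif_pos hσ
    obtain ⟨x, hbunch, -⟩ := hσ.choose_spec
    exact bunchIdx_lt (bunchSet_finite q α β τ (prefixSet_finite pts σ j))
      (by rw [hBdef]; exact ⟨x, hbunch⟩) (hd σ j)
  · rintro ⟨σ, t⟩ hmem ⟨σ', t'⟩ hmem' heq
    simp only [hA, Finset.mem_coe, Finset.mem_product, Finset.mem_filter, Finset.mem_univ,
      true_and, Finset.mem_Iic] at hmem hmem'
    obtain ⟨hσ, ht⟩ := hmem
    obtain ⟨hσ', ht'⟩ := hmem'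
    simp only [Prod.mk.injEq] at heq
    obtain ⟨heq1, heq2⟩ := heq
    -- unpack the two events
    have hBdef : chooseB pts q α β τ j σ = hσ.choose := dif_pos hσ
    have hBdef' : chooseB pts q α β τ j σ' = hσ'.choose := dif_pos hσ'
    rw [hBdef, hBdef'] at heq1
    have hsp := hσ.choose_spec
    have hsp' := hσ'.choose_spec
    generalize hg : Exists.choose hσ = B1 at heq1 hsp
    generalize hg' : Exists.choose hσ' = B2 at heq1 hsp'
    obtain ⟨x, hbunch, hmemS, hnotB, t0, ht0, ht0B, ht0min, hclosest⟩ := hsp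
    obtain ⟨x', hbunch', hmemS', hnotB', t0', ht0', ht0B', ht0min', hclosest'⟩ := hsp'
    -- the prefix sets agree
    have hS : prefixSet pts σ' j = prefixSet pts σ j := by
      rw [← prefixSet_cyc pts σ' ht', ← heq2, prefixSet_cyc pts σ ht]
    -- the bunches agree
    have hBB : B1 = B2 := by
      have heq1' : bunchIdx q α β τ (prefixSet pts σ j) B1
          = bunchIdx q α β τ (prefixSet pts σ j) B2 := by
        rw [heq1, hS]
      exact bunchIdx_inj (bunchSet_finite q α β τ (prefixSet_finite pts σ j))
        ⟨x, hbunch⟩ ⟨x', hS ▸ hbunch'⟩ heq1'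
    -- the first values agree
    obtain ⟨u0, hu0, hu0val, hu0min⟩ :=
      first_transfer (t := t) pts ht ht0 ht0B ht0min hnotB
    obtain ⟨u0', hu0', hu0val', hu0min'⟩ :=
      first_transfer (t := t') pts ht' ht0' ht0B' ht0min' hnotB'
    rw [← heq2] at hu0val' hu0min'
    have huu : u0 = u0' := by
      apply le_antisymm
      · exact hu0min _ hu0' (by rw [hu0val', hBB]; exact ht0B')
      · exact hu0min' _ hu0 (by rw [hu0val, ← hBB]; exact ht0B)
    have hbval : pts (σ t0) = pts (σ' t0') := by
      rw [← hu0val, ← hu0val', huu]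
    -- the last points agree
    have hpp : pts (σ j) = pts (σ' j) := by
      by_contra hne
      have h1 : dist (pts (σ t0)) (pts (σ j)) < dist (pts (σ t0)) (pts (σ' j)) :=
        hclosest _ (hS ▸ hmemS') (hBB ▸ hnotB') (fun h => hne h.symm)
      have h2 : dist (pts (σ' t0')) (pts (σ' j)) < dist (pts (σ' t0')) (pts (σ j)) :=
        hclosest' _ (hS.symm ▸ hmemS) (hBB ▸ hnotB) hne
      rw [← hbval] at h2
      linarith
    -- hence t = t'
    have htt : t = t' := by
      have e1 : (σ * cyc t j) t = σ j := by
        rw [Equiv.Perm.mul_apply, cyc_self ht]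
      have e2 : (σ' * cyc t' j) t' = σ' j := by
        rw [Equiv.Perm.mul_apply, cyc_self ht']
      rw [← heq2] at e2
      have : pts ((σ * cyc t j) t) = pts ((σ * cyc t j) t') := by
        rw [e1, e2, hpp]
      exact (σ * cyc t j).injective (hinj this)
    subst htt
    have hσσ : σ = σ' := mul_right_cancel heq2
    rw [hσσ]

/-- If the number of bunches near the fixed point `q` in any prefix is at most `d`, then
the expected number of split-above events over positions `j ≥ 2` is at most
`d·Σ_{j=2}^n 1/(j-1)`; stated without division by `n!`. -/
theorem expected_split_above_events {n : ℕ} {M : Type*} [MetricSpace M]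
    (pts : Fin n → M) (hinj : Function.Injective pts)
    (q : M) (hq : q ∉ Set.range pts)
    (α β τ : ℝ) (hα : 0 < α) (hα2 : α ≤ 1 / 2) (hβ : 2 * α ≤ β)
    (d : ℕ)
    (hd : ∀ (σ : Equiv.Perm (Fin n)) (j : Fin n),
      ({B : Set M | ∃ x, IsBunch (prefixSet pts σ j) q α β τ B x}).ncard ≤ d) :
    ∑ σ : Equiv.Perm (Fin n),
      (({j : Fin n | 1 ≤ (j : ℕ) ∧ SplitAboveEvent pts q α β τ σ j}).ncard : ℝ)
      ≤ (n.factorial : ℝ) * (d * ∑ m ∈ Finset.range (n - 1), (1 : ℝ) / (m + 1)) := by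
  classical
  have key := key_count pts hinj q α β τ d hd
  have hstep1 : ∑ σ : Equiv.Perm (Fin n),
      (({j : Fin n | 1 ≤ (j : ℕ) ∧ SplitAboveEvent pts q α β τ σ j}).ncard : ℝ)
      = ∑ σ : Equiv.Perm (Fin n), ∑ j : Fin n,
          (if 1 ≤ (j:ℕ) ∧ SplitAboveEvent pts q α β τ σ j then (1:ℝ) else 0) := by
    refine Finset.sum_congr rfl fun σ _ => ?_
    have hset : {j : Fin n | 1 ≤ (j : ℕ) ∧ SplitAboveEvent pts q α β τ σ j}
        = ↑(Finset.univ.filter fun j : Fin n =>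
            1 ≤ (j:ℕ) ∧ SplitAboveEvent pts q α β τ σ j) := by
      ext j; simp
    rw [hset, Set.ncard_coe_finset, Finset.card_filter]
    push_cast
    rfl
  rw [hstep1, Finset.sum_comm]
  have hj : ∀ j : Fin n, (∑ σ : Equiv.Perm (Fin n),
      if 1 ≤ (j:ℕ) ∧ SplitAboveEvent pts q α β τ σ j then (1:ℝ) else 0)
      ≤ (if (j:ℕ) = 0 then 0 else (d:ℝ) * n.factorial * (1 / ((j:ℕ):ℝ))) := by
    intro j
    by_cases h0 : (j:ℕ) = 0
    · rw [if_pos h0]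
      have : ∀ σ : Equiv.Perm (Fin n),
          (if 1 ≤ (j:ℕ) ∧ SplitAboveEvent pts q α β τ σ j then (1:ℝ) else 0) = 0 := by
        intro σ; rw [if_neg]; rintro ⟨h1, -⟩; omega
      simp [this]
    · rw [if_neg h0]
      have hjpos : (0:ℝ) < ((j:ℕ):ℝ) := by
        have : 0 < (j:ℕ) := Nat.pos_of_ne_zero h0
        exact_mod_cast this
      have h1 : (∑ σ : Equiv.Perm (Fin n),
          if 1 ≤ (j:ℕ) ∧ SplitAboveEvent pts q α β τ σ j then (1:ℝ) else 0)
          ≤ ∑ σ : Equiv.Perm (Fin n),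
            if SplitAboveEvent pts q α β τ σ j then (1:ℝ) else 0 := by
        refine Finset.sum_le_sum fun σ _ => ?_
        split_ifs with ha hb hb
        · exact le_rfl
        · exact absurd ha.2 hb
        · exact zero_le_one
        · exact le_rfl
      have h2 : (∑ σ : Equiv.Perm (Fin n),
          if SplitAboveEvent pts q α β τ σ j then (1:ℝ) else 0)
          = ((Finset.univ.filter fun σ : Equiv.Perm (Fin n) =>
              SplitAboveEvent pts q α β τ σ j).card : ℝ) := by
        rw [Finset.sum_boole]
      have h3 : ((Finset.univ.filter fun σ : Equiv.Perm (Fin n) =>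
          SplitAboveEvent pts q α β τ σ j).card : ℝ) * ((j:ℕ):ℝ) ≤ (d:ℝ) * n.factorial := by
        have hn : (Finset.univ.filter fun σ : Equiv.Perm (Fin n) =>
            SplitAboveEvent pts q α β τ σ j).card * (j:ℕ) ≤ d * n.factorial :=
          le_trans (Nat.mul_le_mul_left _ (Nat.le_succ _)) (key j)
        exact_mod_cast hn
      calc (∑ σ : Equiv.Perm (Fin n),
          if 1 ≤ (j:ℕ) ∧ SplitAboveEvent pts q α β τ σ j then (1:ℝ) else 0)
          ≤ ((Finset.univ.filter fun σ : Equiv.Perm (Fin n) =>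
              SplitAboveEvent pts q α β τ σ j).card : ℝ) := h1.trans (le_of_eq h2)
        _ ≤ (d:ℝ) * n.factorial * (1 / ((j:ℕ):ℝ)) := by
            rw [mul_one_div, le_div_iff₀ hjpos]
            exact h3
  refine le_trans (Finset.sum_le_sum fun j _ => hj j) ?_
  have hsum : ∑ j : Fin n, (if (j:ℕ) = 0 then 0 else (d:ℝ) * n.factorial * (1 / ((j:ℕ):ℝ)))
      = ∑ k ∈ Finset.range n, (if k = 0 then 0 else (d:ℝ) * n.factorial * (1 / (k:ℝ))) :=
    Fin.sum_univ_eq_sum_range (fun k => if k = 0 then 0 else (d:ℝ) * n.factorial * (1 / (k:ℝ))) n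
  rw [hsum]
  rcases n with _ | m
  · simp
  · rw [Finset.sum_range_succ'
      (fun k => if k = 0 then 0 else (d:ℝ) * (m+1).factorial * (1 / (k:ℝ))) m]
    rw [if_pos rfl, add_zero]
    have : ∀ i ∈ Finset.range m,
        (if i + 1 = 0 then 0 else (d:ℝ) * (m+1).factorial * (1 / ((i+1:ℕ):ℝ)))
        = ((m+1).factorial : ℝ) * ((d:ℝ) * (1 / ((i:ℝ) + 1))) := by
      intro i _
      rw [if_neg (Nat.succ_ne_zero i)]
      push_cast
      ring
    rw [Finset.sum_congr rfl this, ← Finset.mul_sum, ← Finset.mul_sum]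
    simp
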